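/- Let X_i, i ≥ 1, be sampled from the Zipf–Poisson ensemble with parameter α > 1 and let A = α²(α+2)/4. Let n = n(N) be a function of N taking integer values n(N) ≥ 2 such that n(N) ≤ (A N / log N)^{1/(α+2)} holds for all large enough N. Then lim_{N→∞} Pr(X_1 > X_2 > … > X_{n(N)}) = 1. -/

import Mathlib

open MeasureTheory ProbabilityTheory Filter

/-- The Zipf–Poisson ensemble with parameters `α > 1`, `N > 0`: the random variables
`X i`, for integers `i ≥ 1`, are independent and `X i ~ Poisson(N * i^(-α))`. -/
def IsZipfPoisson {Ω : Type*} [MeasurableSpace Ω] (P : Measure Ω)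
    (X : ℕ → Ω → ℕ) (α N : ℝ) : Prop :=
  iIndepFun (fun i : {i : ℕ // 1 ≤ i} => X i) P ∧
  ∀ i : ℕ, 1 ≤ i → ∀ k : ℕ,
    P {ω | X i ω = k} =
      ENNReal.ofReal (Real.exp (-(N * (i : ℝ) ^ (-α))) * (N * (i : ℝ) ^ (-α)) ^ k /
        (Nat.factorial k))

lemma tsum_ofReal_exp (x : ℝ) (hx : 0 ≤ x) :
    ∑' a : ℕ, ENNReal.ofReal (x ^ a / a.factorial) = ENNReal.ofReal (Real.exp x) := by
  rw [← ENNReal.ofReal_tsum_of_nonneg (fun n => by positivity)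
    (Real.summable_pow_div_factorial x)]
  congr 1
  rw [Real.exp_eq_exp_ℝ, NormedSpace.exp_eq_tsum_div]

lemma rpow_diff_ge (β : ℝ) (hβ : 0 < β) (x : ℝ) (hx : 1 ≤ x) :
    β * (x + 1) ^ (-β - 1) ≤ x ^ (-β) - (x + 1) ^ (-β) := by
  have hx0 : (0:ℝ) < x := lt_of_lt_of_le one_pos hx
  have hab : x < x + 1 := by linarith
  obtain ⟨c, hc, hceq⟩ := exists_hasDerivAt_eq_slope (fun y => y ^ (-β))
      (fun y => -β * y ^ (-β - 1)) hab
      (fun y hy => (Real.continuousAt_rpow_const y (-β)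
        (Or.inl (ne_of_gt (lt_of_lt_of_le hx0 hy.1)))).continuousWithinAt)
      (fun y hy => by
        have := Real.hasDerivAt_rpow_const (x := y) (p := -β)
          (Or.inl (ne_of_gt (lt_trans hx0 hy.1)))
        simpa [sub_eq_add_neg, neg_add] using this)
  have hc1 : 0 < c := lt_trans hx0 hc.1
  have hc2 : c ≤ x + 1 := le_of_lt hc.2
  have hmono : (x + 1) ^ (-β - 1) ≤ c ^ (-β - 1) :=
    Real.rpow_le_rpow_of_nonpos hc1 hc2 (by linarith)
  have : -β * c ^ (-β - 1) = (x + 1) ^ (-β) - x ^ (-β) := by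
    rw [hceq]; ring_nf
  nlinarith [mul_le_mul_of_nonneg_left hmono (le_of_lt hβ)]

lemma pair_bound {Ω : Type*} [MeasurableSpace Ω] (P : Measure Ω) (X Y : Ω → ℕ) (l m : ℝ)
    (hm : 0 < m) (hml : m ≤ l)
    (hind : IndepFun X Y P)
    (hX : ∀ k : ℕ, P {ω | X ω = k} = ENNReal.ofReal (Real.exp (-l) * l ^ k / k.factorial))
    (hY : ∀ k : ℕ, P {ω | Y ω = k} = ENNReal.ofReal (Real.exp (-m) * m ^ k / k.factorial)) :
    P {ω | X ω ≤ Y ω} ≤ ENNReal.ofReal (Real.exp (-(Real.sqrt l - Real.sqrt m) ^ 2)) := by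
  have hl : 0 < l := lt_of_lt_of_le hm hml
  set x : ℝ := Real.sqrt (l * m) with hxdef
  have hx0 : 0 ≤ x := Real.sqrt_nonneg _
  have hx2 : x ^ 2 = l * m := Real.sq_sqrt (by positivity)
  have hmx : m ≤ x := by
    have : m = Real.sqrt (m * m) := by
      rw [Real.sqrt_mul_self hm.le]
    rw [this]
    exact Real.sqrt_le_sqrt (by nlinarith)
  have key : ∀ a b : ℕ, a ≤ b → l ^ a * m ^ b ≤ x ^ a * x ^ b := by
    intro a b hab
    obtain ⟨k, rfl⟩ := Nat.exists_eq_add_of_le hab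
    have h1 : l ^ a * m ^ (a + k) = (l * m) ^ a * m ^ k := by ring
    have h2 : x ^ a * x ^ (a + k) = (l * m) ^ a * x ^ k := by
      rw [← pow_add]
      have : a + (a + k) = 2 * a + k := by ring
      rw [this, pow_add, pow_mul, hx2]
    rw [h1, h2]
    exact mul_le_mul_of_nonneg_left (pow_le_pow_left₀ hm.le hmx k) (by positivity)
  set T : ℕ × ℕ → Set Ω := fun p =>
    if p.1 ≤ p.2 then {ω | X ω = p.1} ∩ {ω | Y ω = p.2} else ∅ with hT
  have hcover : {ω | X ω ≤ Y ω} ⊆ ⋃ p : ℕ × ℕ, T p := by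
    intro ω hω
    refine Set.mem_iUnion.2 ⟨(X ω, Y ω), ?_⟩
    have hxy : X ω ≤ Y ω := hω
    rw [hT]
    dsimp only
    rw [if_pos hxy]
    exact ⟨rfl, rfl⟩
  have hbound : ∀ p : ℕ × ℕ, P (T p) ≤
      ENNReal.ofReal (Real.exp (-(l + m))) * ENNReal.ofReal (x ^ p.1 / p.1.factorial)
        * ENNReal.ofReal (x ^ p.2 / p.2.factorial) := by
    rintro ⟨a, b⟩
    by_cases hab : a ≤ b
    · have hTeq : T (a, b) = X ⁻¹' {a} ∩ Y ⁻¹' {b} := by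
        simp only [hT, if_pos hab]; rfl
      rw [hTeq, hind.measure_inter_preimage_eq_mul _ _ (measurableSet_singleton a)
        (measurableSet_singleton b)]
      have : X ⁻¹' {a} = {ω | X ω = a} := rfl
      rw [this]
      have : Y ⁻¹' {b} = {ω | Y ω = b} := rfl
      rw [this, hX a, hY b, ← ENNReal.ofReal_mul (by positivity),
        ← ENNReal.ofReal_mul (by positivity), ← ENNReal.ofReal_mul (by positivity)]
      apply ENNReal.ofReal_le_ofReal
      have hexp : Real.exp (-l) * Real.exp (-m) = Real.exp (-(l+m)) := by
        rw [← Real.exp_add]; ring_nf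
      have hk := key a b hab
      calc Real.exp (-l) * l ^ a / a.factorial * (Real.exp (-m) * m ^ b / b.factorial)
          = (Real.exp (-l) * Real.exp (-m)) * (l ^ a * m ^ b) / (a.factorial * b.factorial) := by
            ring
        _ ≤ (Real.exp (-l) * Real.exp (-m)) * (x ^ a * x ^ b) / (a.factorial * b.factorial) := by
            apply div_le_div_of_nonneg_right ?_ (by positivity)
            exact mul_le_mul_of_nonneg_left hk (by positivity)
        _ = Real.exp (-(l+m)) * (x ^ a / a.factorial) * (x ^ b / b.factorial) := by
            rw [← hexp]; ring
    · simp only [hT, if_neg hab, measure_empty]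
      exact zero_le
  calc P {ω | X ω ≤ Y ω} ≤ P (⋃ p : ℕ × ℕ, T p) := measure_mono hcover
    _ ≤ ∑' p : ℕ × ℕ, P (T p) := measure_iUnion_le _
    _ ≤ ∑' p : ℕ × ℕ, ENNReal.ofReal (Real.exp (-(l + m)))
          * ENNReal.ofReal (x ^ p.1 / p.1.factorial)
          * ENNReal.ofReal (x ^ p.2 / p.2.factorial) := ENNReal.tsum_le_tsum hbound
    _ = ENNReal.ofReal (Real.exp (-(l + m))) * ENNReal.ofReal (Real.exp x)
          * ENNReal.ofReal (Real.exp x) := by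
        rw [ENNReal.tsum_prod']
        have hin : ∀ a : ℕ, (∑' b : ℕ, ENNReal.ofReal (Real.exp (-(l + m)))
            * ENNReal.ofReal (x ^ a / a.factorial) * ENNReal.ofReal (x ^ b / b.factorial))
            = ENNReal.ofReal (Real.exp (-(l + m))) * ENNReal.ofReal (Real.exp x)
              * ENNReal.ofReal (x ^ a / a.factorial) := fun a => by
          rw [ENNReal.tsum_mul_left, tsum_ofReal_exp x hx0]; ring
        simp_rw [hin]
        rw [ENNReal.tsum_mul_left, tsum_ofReal_exp x hx0]
    _ = ENNReal.ofReal (Real.exp (-(Real.sqrt l - Real.sqrt m) ^ 2)) := by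
        rw [← ENNReal.ofReal_mul (by positivity), ← ENNReal.ofReal_mul (by positivity),
          ← Real.exp_add, ← Real.exp_add]
        have h1 : Real.sqrt l * Real.sqrt m = x := (Real.sqrt_mul hl.le m).symm
        have h2 : Real.sqrt l ^ 2 = l := Real.sq_sqrt hl.le
        have h3 : Real.sqrt m ^ 2 = m := Real.sq_sqrt hm.le
        have hE : -(l + m) + x + x = -(Real.sqrt l - Real.sqrt m) ^ 2 := by
          linear_combination (-2 : ℝ) * h1 + h2 + h3
        rw [hE]

/-- If `n(N) ≥ 2` and `n(N) ≤ (A N / log N)^(1/(α+2))` for large `N`, where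
`A = α²(α+2)/4`, then `Pr(X₁ > X₂ > … > X_{n(N)}) → 1` as `N → ∞` in the
Zipf–Poisson ensemble with parameter `N`. -/
theorem zipf_poisson_order_tendsto_one
    {Ω : Type*} [MeasurableSpace Ω] (P : ℝ → Measure Ω)
    [∀ N, IsProbabilityMeasure (P N)]
    (X : ℕ → Ω → ℕ) (α : ℝ) (hα : 1 < α)
    (hzp : ∀ N : ℝ, 0 < N → IsZipfPoisson (P N) X α N)
    (n : ℝ → ℕ) (hn2 : ∀ N, 2 ≤ n N)
    (hn : ∀ᶠ N : ℝ in atTop,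
      (n N : ℝ) ≤ (α ^ 2 * (α + 2) / 4 * N / Real.log N) ^ ((1 : ℝ) / (α + 2))) :
    Tendsto
      (fun N : ℝ => P N {ω | ∀ i : ℕ, 1 ≤ i → i < n N → X (i + 1) ω < X i ω})
      atTop (nhds 1) := by
  have hα0 : (0:ℝ) < α := by linarith
  have hα2 : (0:ℝ) < α + 2 := by linarith
  have hβ : (0:ℝ) < α / 2 := by linarith
  set A : ℝ := α ^ 2 * (α + 2) / 4 with hA
  have hApos : 0 < A := by rw [hA]; positivity
  set c : ℝ := 1 / (α + 2) with hc
  have hcpos : 0 < c := by rw [hc]; positivity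
  set G : ℝ → Set Ω := fun N => {ω | ∀ i : ℕ, 1 ≤ i → i < n N → X (i + 1) ω < X i ω}
    with hG
  have hbadle : ∀ᶠ N : ℝ in atTop,
      P N (G N)ᶜ ≤ ENNReal.ofReal ((A / Real.log N) ^ c) := by
    filter_upwards [hn, eventually_ge_atTop (Real.exp 1), eventually_gt_atTop (0:ℝ)]
      with N hnN heN hN
    obtain ⟨hind, hpmf⟩ := hzp N hN
    have hlog1 : 1 ≤ Real.log N := by
      rw [Real.le_log_iff_exp_le hN]; simpa using heN
    have hlogpos : 0 < Real.log N := lt_of_lt_of_le one_pos hlog1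
    have hRpos : 0 < A * N / Real.log N := by positivity
    have hi_bound : ∀ i ∈ Finset.Ico 1 (n N),
        P N {ω | X i ω ≤ X (i + 1) ω} ≤
          ENNReal.ofReal (Real.exp (-(Real.log N / (α + 2)))) := by
      intro i hi
      rw [Finset.mem_Ico] at hi
      obtain ⟨hi1, hilt⟩ := hi
      have hi0 : (0:ℝ) < i := by exact_mod_cast hi1
      have hi1' : (1:ℝ) ≤ i := by exact_mod_cast hi1
      set l : ℝ := N * (i:ℝ) ^ (-α) with hl
      set m : ℝ := N * ((i:ℝ) + 1) ^ (-α) with hm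
      have hmpos : 0 < m := by
        rw [hm]; positivity
      have hml : m ≤ l := by
        rw [hl, hm]
        exact mul_le_mul_of_nonneg_left
          (Real.rpow_le_rpow_of_nonpos hi0 (by linarith) (by linarith)) hN.le
      have hindXY : IndepFun (X i) (X (i + 1)) (P N) :=
        hind.indepFun (i := ⟨i, hi1⟩) (j := ⟨i + 1, le_trans hi1 (Nat.le_succ i)⟩)
          (by simp)
      have hpb := pair_bound (P N) (X i) (X (i + 1)) l m hmpos hml hindXY
        (fun k => hpmf i hi1 k)
        (fun k => by
          have := hpmf (i + 1) (by omega) k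
          rw [Nat.cast_add, Nat.cast_one] at this
          exact this)
      refine le_trans hpb (ENNReal.ofReal_le_ofReal (Real.exp_le_exp.mpr
        (neg_le_neg ?_)))
      have hsq_i : Real.sqrt ((i:ℝ) ^ (-α)) = (i:ℝ) ^ (-(α/2)) := by
        rw [Real.sqrt_eq_rpow, ← Real.rpow_mul hi0.le]
        congr 1
        ring
      have hsq_i1 : Real.sqrt (((i:ℝ) + 1) ^ (-α)) = ((i:ℝ) + 1) ^ (-(α/2)) := by
        rw [Real.sqrt_eq_rpow, ← Real.rpow_mul (by positivity : (0:ℝ) ≤ (i:ℝ) + 1)]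
        congr 1
        ring
      have hsl : Real.sqrt l = Real.sqrt N * (i:ℝ) ^ (-(α/2)) := by
        rw [hl, Real.sqrt_mul hN.le, hsq_i]
      have hsm : Real.sqrt m = Real.sqrt N * ((i:ℝ) + 1) ^ (-(α/2)) := by
        rw [hm, Real.sqrt_mul hN.le, hsq_i1]
      have hd := rpow_diff_ge (α/2) hβ (i:ℝ) hi1'
      have hdpos : 0 < (α/2) * ((i:ℝ) + 1) ^ (-(α/2) - 1) := by positivity
      have hsq : (Real.sqrt l - Real.sqrt m) ^ 2
          = N * ((i:ℝ) ^ (-(α/2)) - ((i:ℝ) + 1) ^ (-(α/2))) ^ 2 := by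
        rw [hsl, hsm, ← mul_sub, mul_pow, Real.sq_sqrt hN.le]
      have hsq2 : N * ((α/2) * ((i:ℝ) + 1) ^ (-(α/2) - 1)) ^ 2
          ≤ (Real.sqrt l - Real.sqrt m) ^ 2 := by
        rw [hsq]
        exact mul_le_mul_of_nonneg_left (pow_le_pow_left₀ hdpos.le hd 2) hN.le
      have hpow2 : ((α/2) * ((i:ℝ) + 1) ^ (-(α/2) - 1)) ^ 2
          = (α ^ 2 / 4) * ((i:ℝ) + 1) ^ (-(α + 2)) := by
        rw [mul_pow, ← Real.rpow_natCast (((i:ℝ) + 1) ^ (-(α/2) - 1)) 2,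
          ← Real.rpow_mul (by positivity : (0:ℝ) ≤ (i:ℝ) + 1)]
        congr 1
        · ring
        · congr 1
          push_cast
          ring
      have hi1n : ((i:ℝ) + 1) ≤ (A * N / Real.log N) ^ c := by
        have h0 : ((i:ℝ) + 1) ≤ (n N : ℝ) := by exact_mod_cast hilt
        exact le_trans h0 hnN
      have hipow : ((i:ℝ) + 1) ^ (α + 2) ≤ A * N / Real.log N := by
        have h1 := Real.rpow_le_rpow (by positivity) hi1n hα2.le
        rwa [← Real.rpow_mul hRpos.le, hc, one_div,
          inv_mul_cancel₀ (ne_of_gt hα2), Real.rpow_one] at h1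
      have hinv : Real.log N / (A * N) ≤ ((i:ℝ) + 1) ^ (-(α + 2)) := by
        rw [Real.rpow_neg (by positivity : (0:ℝ) ≤ (i:ℝ) + 1)]
        have h2 : (A * N / Real.log N)⁻¹ ≤ (((i:ℝ) + 1) ^ (α + 2))⁻¹ :=
          inv_anti₀ (by positivity) hipow
        rwa [inv_div] at h2
      calc Real.log N / (α + 2)
          = N * (α ^ 2 / 4) * (Real.log N / (A * N)) := by
            rw [hA]; field_simp
        _ ≤ N * (α ^ 2 / 4) * (((i:ℝ) + 1) ^ (-(α + 2))) :=
            mul_le_mul_of_nonneg_left hinv (by positivity)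
        _ = N * ((α/2) * ((i:ℝ) + 1) ^ (-(α/2) - 1)) ^ 2 := by
            rw [hpow2]; ring
        _ ≤ (Real.sqrt l - Real.sqrt m) ^ 2 := hsq2
    have hcompl : (G N)ᶜ ⊆ ⋃ i ∈ Finset.Ico 1 (n N), {ω | X i ω ≤ X (i + 1) ω} := by
      intro ω hω
      simp only [hG, Set.mem_compl_iff, Set.mem_setOf_eq, not_forall] at hω
      obtain ⟨i, hi1, hilt, hnot⟩ := hω
      exact Set.mem_biUnion (Finset.mem_Ico.mpr ⟨hi1, hilt⟩) (not_lt.mp hnot)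
    have hEnn : (0:ℝ) ≤ Real.exp (-(Real.log N / (α + 2))) := (Real.exp_pos _).le
    calc P N (G N)ᶜ
        ≤ ∑ i ∈ Finset.Ico 1 (n N), P N {ω | X i ω ≤ X (i + 1) ω} :=
          le_trans (measure_mono hcompl) (measure_biUnion_finset_le _ _)
      _ ≤ ∑ i ∈ Finset.Ico 1 (n N),
            ENNReal.ofReal (Real.exp (-(Real.log N / (α + 2)))) :=
          Finset.sum_le_sum hi_bound
      _ ≤ ENNReal.ofReal ((n N : ℝ) * Real.exp (-(Real.log N / (α + 2)))) := by
          rw [Finset.sum_const, Nat.card_Ico, nsmul_eq_mul,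
            ← ENNReal.ofReal_natCast (n N - 1), ← ENNReal.ofReal_mul (by positivity)]
          apply ENNReal.ofReal_le_ofReal
          apply mul_le_mul_of_nonneg_right _ hEnn
          exact_mod_cast Nat.sub_le (n N) 1
      _ ≤ ENNReal.ofReal ((A * N / Real.log N) ^ c
            * Real.exp (-(Real.log N / (α + 2)))) :=
          ENNReal.ofReal_le_ofReal (mul_le_mul_of_nonneg_right hnN hEnn)
      _ = ENNReal.ofReal ((A / Real.log N) ^ c) := by
          congr 1
          have hE : Real.exp (-(Real.log N / (α + 2))) = N ^ (-c) := by
            rw [Real.rpow_def_of_pos hN]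
            congr 1
            rw [hc]; ring
          have hsplit : A * N / Real.log N = (A / Real.log N) * N := by ring
          rw [hE, hsplit, Real.mul_rpow (by positivity) hN.le, mul_assoc,
            ← Real.rpow_add hN, add_neg_cancel, Real.rpow_zero, mul_one]
  have hofreal0 : Tendsto (fun N : ℝ => ENNReal.ofReal ((A / Real.log N) ^ c))
      atTop (nhds 0) := by
    have h0 : Tendsto (fun N : ℝ => A / Real.log N) atTop (nhds 0) :=
      Tendsto.div_atTop tendsto_const_nhds Real.tendsto_log_atTop
    have h1 : Tendsto (fun N : ℝ => (A / Real.log N) ^ c) atTop (nhds 0) := by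
      have hcont := (Real.continuousAt_rpow_const 0 c (Or.inr hcpos.le)).tendsto
      have h2 := hcont.comp h0
      rw [Real.zero_rpow (ne_of_gt hcpos)] at h2
      exact h2
    simpa using ENNReal.tendsto_ofReal h1
  have hbad0 : Tendsto (fun N : ℝ => P N (G N)ᶜ) atTop (nhds 0) := by
    apply tendsto_of_tendsto_of_tendsto_of_le_of_le' tendsto_const_nhds hofreal0
      (Eventually.of_forall fun N => zero_le) hbadle
  have h1minus : Tendsto (fun N : ℝ => 1 - P N (G N)ᶜ) atTop (nhds 1) := by
    have hcont : Continuous (fun x : ENNReal => 1 - x) :=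
      ENNReal.continuous_sub_left ENNReal.one_ne_top
    have := (hcont.tendsto 0).comp hbad0
    simpa [Function.comp_def] using this
  apply tendsto_of_tendsto_of_tendsto_of_le_of_le' h1minus tendsto_const_nhds
  · refine Eventually.of_forall fun N => ?_
    rw [tsub_le_iff_right]
    calc (1:ENNReal) = P N Set.univ := (measure_univ).symm
      _ = P N (G N ∪ (G N)ᶜ) := by rw [Set.union_compl_self]
      _ ≤ P N (G N) + P N (G N)ᶜ := measure_union_le _ _
  · exact Eventually.of_forall fun N => prob_le_one
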